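/- (Combined expected cost bound for symmetric rounding.) Let f : 2^V → ℝ≥0 be a non-negative symmetric submodular function with f(∅) = 0, x a fractional allocation, and suppose A'_1, …, A'_k are pairwise disjoint subsets with ∪_i A'_i = ∪_i A(i,θ) and Σ_i f(A'_i) ≤ Σ_i f(A(i,θ)) for each θ. Then ∫_0^1 [ Σ_{i=1}^{k−1} f(A'_i(θ)) + f(A'_k(θ) ∪ U(θ)) ] dθ ≤ (3/2) Σ_{i=1}^k ∫_0^1 f(A(i,θ)) dθ. -/

import Mathlib

open MeasureTheory Set intervalIntegral

set_option linter.unusedSectionVars false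
namespace SymRoundAux

variable {V : Type*} [Fintype V]

noncomputable def Bnd (f : Set V → ℝ) : ℝ := ∑ T : Finset V, |f ↑T|

lemma abs_le_Bnd (f : Set V → ℝ) (S : Set V) : |f S| ≤ Bnd f := by
  classical
  have h : S = ↑(Finset.univ.filter fun v => v ∈ S) := by ext v; simp
  rw [h]
  exact Finset.single_le_sum (f := fun T : Finset V => |f ↑T|) (fun T _ => abs_nonneg _) (Finset.mem_univ _)

lemma meas_f_comp (f : Set V → ℝ) (S : ℝ → Set V) (hS : ∀ v, MeasurableSet {θ | v ∈ S θ}) :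
    Measurable fun θ => f (S θ) := by
  classical
  have hrep : (fun θ => f (S θ)) = fun θ =>
      ∑ T : Finset V, Set.indicator {θ' | S θ' = ↑T} (fun _ => f ↑T) θ := by
    funext θ
    rw [Finset.sum_eq_single (Finset.univ.filter fun v => v ∈ S θ)]
    · rw [Set.indicator_of_mem]
      · congr 1; ext v; simp
      · show S θ = _; ext v; simp
    · intro T _ hT
      apply Set.indicator_of_notMem
      intro h
      apply hT
      have h' : S θ = ↑T := h
      ext v; simp [h']
    · intro h; exact absurd (Finset.mem_univ _) h
  rw [hrep]
  apply Finset.measurable_sum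
  intro T _
  apply Measurable.indicator measurable_const
  have h : {θ' | S θ' = (↑T : Set V)} = ⋂ v, {θ' | v ∈ S θ' ↔ v ∈ T} := by
    ext θ'; simp [Set.ext_iff]
  rw [h]
  apply MeasurableSet.iInter
  intro v
  by_cases hv : v ∈ T
  · simp only [hv, iff_true]; exact hS v
  · simp only [hv, iff_false]; exact (hS v).compl

lemma ii_f_comp (f : Set V → ℝ) (S : ℝ → Set V) (hS : ∀ v, MeasurableSet {θ | v ∈ S θ})
    (a b : ℝ) : IntervalIntegrable (fun θ => f (S θ)) volume a b := by
  apply IntervalIntegrable.mono_fun (_root_.intervalIntegrable_const (c := Bnd f))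
    ((meas_f_comp f S hS).aestronglyMeasurable)
  apply Filter.Eventually.of_forall
  intro θ
  simp only [Real.norm_eq_abs]
  exact (abs_le_Bnd f _).trans (le_abs_self _)

lemma ii_lov (f : Set V → ℝ) (y : V → ℝ) (a b : ℝ) :
    IntervalIntegrable (fun θ => f {v | θ ≤ y v}) volume a b := by
  apply ii_f_comp f (fun θ => {v | θ ≤ y v})
  intro v
  have : {θ : ℝ | v ∈ {v' | θ ≤ y v'}} = Set.Iic (y v) := by ext θ; simp
  rw [this]; exact measurableSet_Iic

noncomputable def lov (f : Set V → ℝ) (y : V → ℝ) : ℝ := ∫ θ in (0:ℝ)..2, f {v | θ ≤ y v}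

lemma lov_zero (f : Set V → ℝ) (hempty : f (∅ : Set V) = 0) :
    lov f (fun _ => (0:ℝ)) = 0 := by
  unfold lov
  rw [intervalIntegral.integral_congr_ae (g := fun _ => (0:ℝ))]
  · simp
  · apply Filter.Eventually.of_forall
    intro θ hθ
    rw [Set.uIoc_of_le (by norm_num : (0:ℝ) ≤ 2)] at hθ
    have : {v : V | θ ≤ 0} = ∅ := by ext v; simp; linarith [hθ.1]
    rw [this, hempty]

lemma lov_eq_int01 (f : Set V → ℝ) (hempty : f (∅ : Set V) = 0) (y : V → ℝ)
    (hy1 : ∀ v, y v ≤ 1) : lov f y = ∫ θ in (0:ℝ)..1, f {v | θ ≤ y v} := by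
  have h12 : ∫ θ in (1:ℝ)..2, f {v | θ ≤ y v} = 0 := by
    rw [intervalIntegral.integral_congr_ae (g := fun _ => (0:ℝ))]
    · simp
    · apply Filter.Eventually.of_forall
      intro θ hθ
      rw [Set.uIoc_of_le (by norm_num : (1:ℝ) ≤ 2)] at hθ
      have : {v : V | θ ≤ y v} = ∅ := by
        ext v; simp only [mem_setOf_eq, mem_empty_iff_false, iff_false, not_le]
        linarith [hy1 v, hθ.1]
      rw [this, hempty]
  have := intervalIntegral.integral_add_adjacent_intervals
    (ii_lov f y 0 1) (ii_lov f y 1 2)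
  unfold lov
  linarith

lemma lov_lattice (f : Set V → ℝ)
    (hsub : ∀ A B : Set V, f A + f B ≥ f (A ∩ B) + f (A ∪ B)) (y z : V → ℝ) :
    lov f (fun v => max (y v) (z v)) + lov f (fun v => min (y v) (z v)) ≤
      lov f y + lov f z := by
  unfold lov
  rw [← intervalIntegral.integral_add (ii_lov f _ 0 2) (ii_lov f _ 0 2),
      ← intervalIntegral.integral_add (ii_lov f y 0 2) (ii_lov f z 0 2)]
  apply intervalIntegral.integral_mono_on (by norm_num)
    ((ii_lov f _ 0 2).add (ii_lov f _ 0 2)) ((ii_lov f y 0 2).add (ii_lov f z 0 2))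
  intro θ _
  have h1 : {v : V | θ ≤ max (y v) (z v)} = {v | θ ≤ y v} ∪ {v | θ ≤ z v} := by
    ext v; simp [le_max_iff]
  have h2 : {v : V | θ ≤ min (y v) (z v)} = {v | θ ≤ y v} ∩ {v | θ ≤ z v} := by
    ext v; simp [le_min_iff]
  rw [h1, h2]
  linarith [hsub {v | θ ≤ y v} {v | θ ≤ z v}]

lemma lov_subadd (f : Set V → ℝ)
    (hsub : ∀ A B : Set V, f A + f B ≥ f (A ∩ B) + f (A ∪ B))
    (hempty : f (∅ : Set V) = 0)
    (y z : V → ℝ) (hy : ∀ v, 0 ≤ y v) (hz : ∀ v, 0 ≤ z v)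
    (hyz : ∀ v, y v + z v ≤ 2) :
    lov f (fun v => y v + z v) ≤ lov f y + lov f z := by
  classical
  set n := Fintype.card V with hn
  set u : V → ℝ := fun v => y v + z v with hu
  set e0 : Fin n ≃ V := (Fintype.equivFin V).symm with he0
  set σ : Equiv.Perm (Fin n) := Tuple.sort (fun i => -(u (e0 i))) with hσ
  set e : Fin n ≃ V := σ.trans e0 with he
  have hanti : ∀ s t : Fin n, s ≤ t → u (e t) ≤ u (e s) := by
    intro s t hst
    have h := Tuple.monotone_sort (fun i => -(u (e0 i))) hst
    simp only [Function.comp] at h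
    have h' : -(u (e0 (σ s))) ≤ -(u (e0 (σ t))) := h
    have he' : ∀ r, e r = e0 (σ r) := fun r => rfl
    rw [he' s, he' t]; linarith
  set P : ℕ → Set V := fun t => e '' {s : Fin n | (s : ℕ) < t} with hP
  set w : ℕ → ℝ := fun t => f (P (t + 1)) - f (P t) with hw
  -- greedy combinatorial lemma
  have hGCL : ∀ T : Finset (Fin n), (∑ t ∈ T, w ↑t) ≤ f (e '' ↑T) := by
    intro T
    induction T using Finset.strongInduction with
    | _ T ih =>
      rcases T.eq_empty_or_nonempty with rfl | hT
      · simp [hempty]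
      · have ht0T : T.max' hT ∈ T := T.max'_mem hT
        set t0 := T.max' hT with ht0
        have hsum : ∑ t ∈ T, w ↑t = ∑ t ∈ T.erase t0, w ↑t + w ↑t0 :=
          (Finset.sum_erase_add _ _ ht0T).symm
        have hsubset : e '' ↑(T.erase t0) ⊆ P ↑t0 := by
          rintro _ ⟨s, hs, rfl⟩
          have hsT : s ∈ T.erase t0 := hs
          have hlt : s < t0 := lt_of_le_of_ne
            (T.le_max' s (Finset.mem_of_mem_erase hsT)) (Finset.ne_of_mem_erase hsT)
          exact ⟨s, hlt, rfl⟩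
        have hnotmem : e t0 ∉ P ↑t0 := by
          rintro ⟨s, hs, hes⟩
          have hst : s = t0 := e.injective hes
          subst hst
          have hlt : (t0 : ℕ) < (t0 : ℕ) := hs
          omega
        have hP1 : P (↑t0 + 1) = P ↑t0 ∪ {e t0} := by
          show ⇑e '' {s : Fin n | (s : ℕ) < ↑t0 + 1} = ⇑e '' {s : Fin n | (s : ℕ) < ↑t0} ∪ {e t0}
          have hseteq : {s : Fin n | (s : ℕ) < ↑t0 + 1} = {s : Fin n | (s:ℕ) < ↑t0} ∪ {t0} := by
            ext s
            simp only [mem_setOf_eq, Set.mem_union, Set.mem_singleton_iff, Nat.lt_succ_iff,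
              le_iff_lt_or_eq]
            constructor
            · rintro (h | h); exacts [Or.inl h, Or.inr (Fin.ext h)]
            · rintro (h | rfl); exacts [Or.inl h, Or.inr rfl]
          rw [hseteq, Set.image_union, Set.image_singleton]
        have hint : (e '' ↑(T.erase t0) ∪ {e t0}) ∩ P ↑t0 = e '' ↑(T.erase t0) := by
          apply Set.Subset.antisymm
          · rintro v ⟨hv1 | hv2, hvP⟩
            · exact hv1
            · rw [Set.mem_singleton_iff] at hv2; subst hv2; exact absurd hvP hnotmem
          · intro v hv; exact ⟨Or.inl hv, hsubset hv⟩
        have huni : (e '' ↑(T.erase t0) ∪ {e t0}) ∪ P ↑t0 = P (↑t0 + 1) := by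
          rw [hP1]; ext v
          simp only [Set.mem_union]
          constructor
          · rintro ((h | h) | h)
            exacts [Or.inl (hsubset h), Or.inr h, Or.inl h]
          · rintro (h | h); exacts [Or.inr h, Or.inl (Or.inr h)]
        have himg : e '' ↑T = e '' ↑(T.erase t0) ∪ {e t0} := by
          conv_lhs => rw [← Finset.insert_erase ht0T]
          rw [Finset.coe_insert, Set.image_insert_eq, Set.insert_eq, Set.union_comm]
        have key := hsub (e '' ↑(T.erase t0) ∪ {e t0}) (P ↑t0)
        rw [hint, huni] at key
        have ihe := ih (T.erase t0) (Finset.erase_ssubset ht0T)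
        have hwt0 : w ↑t0 = f (P (↑t0 + 1)) - f (P ↑t0) := rfl
        rw [hsum, himg]
        linarith
  have ii_ite : ∀ (c C a b : ℝ),
      IntervalIntegrable (fun θ => if θ ≤ c then C else 0) volume a b := by
    intro c C a b
    apply IntervalIntegrable.mono_fun (_root_.intervalIntegrable_const (c := |C|))
    · exact (Measurable.ite measurableSet_Iic measurable_const measurable_const).aestronglyMeasurable
    · apply Filter.Eventually.of_forall
      intro θ
      simp only [Real.norm_eq_abs, abs_abs]
      by_cases h : θ ≤ c <;> simp [h]
  have hterm : ∀ (q : V → ℝ) (t : Fin n), 0 ≤ q (e t) → q (e t) ≤ 2 →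
      (∫ θ in (0:ℝ)..2, (if θ ≤ q (e t) then w ↑t else 0)) = q (e t) * w ↑t := by
    intro q t h0 h2
    have i1 : ∫ θ in (0:ℝ)..(q (e t)), (if θ ≤ q (e t) then w ↑t else 0) = q (e t) * w ↑t := by
      rw [intervalIntegral.integral_congr (g := fun _ => w ↑t)]
      · rw [intervalIntegral.integral_const, sub_zero, smul_eq_mul]
      · intro θ hθ
        rw [Set.uIcc_of_le h0] at hθ
        simp [hθ.2]
    have i2 : ∫ θ in (q (e t))..2, (if θ ≤ q (e t) then w ↑t else 0) = 0 := by
      rw [intervalIntegral.integral_congr_ae (g := fun _ => (0:ℝ))]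
      · simp
      · apply Filter.Eventually.of_forall
        intro θ hθ
        rw [Set.uIoc_of_le h2] at hθ
        simp [not_le.2 hθ.1]
    have hadj := intervalIntegral.integral_add_adjacent_intervals
      (ii_ite (q (e t)) (w ↑t) 0 (q (e t))) (ii_ite (q (e t)) (w ↑t) (q (e t)) 2)
    linarith
  have stepA : ∀ q : V → ℝ, (∀ v, 0 ≤ q v) → (∀ v, q v ≤ 2) →
      (∑ t : Fin n, q (e t) * w ↑t) ≤ lov f q := by
    intro q hq0 hq2
    have hsum_int : ∑ t : Fin n, q (e t) * w ↑t
        = ∫ θ in (0:ℝ)..2, ∑ t : Fin n, (if θ ≤ q (e t) then w ↑t else 0) := by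
      rw [intervalIntegral.integral_finset_sum (fun t _ => ii_ite (q (e t)) (w ↑t) 0 2)]
      exact (Finset.sum_congr rfl fun t _ => (hterm q t (hq0 _) (hq2 _)).symm)
    rw [hsum_int]
    apply intervalIntegral.integral_mono_on (by norm_num)
    · have hii := IntervalIntegrable.sum (μ := volume) (a := (0:ℝ)) (b := 2) Finset.univ
        (f := fun (t : Fin n) (θ : ℝ) => if θ ≤ q (e t) then w ↑t else 0)
        (fun t _ => ii_ite (q (e t)) (w ↑t) 0 2)
      have hfn : (∑ t : Fin n, fun (θ : ℝ) => if θ ≤ q (e t) then w ↑t else 0)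
          = fun (θ : ℝ) => ∑ t : Fin n, if θ ≤ q (e t) then w ↑t else 0 := by
        funext θ; simp
      rwa [hfn] at hii
    · exact ii_lov f q 0 2
    intro θ _
    have hflt : ∑ t : Fin n, (if θ ≤ q (e t) then w ↑t else 0)
        = ∑ t ∈ Finset.univ.filter (fun t : Fin n => θ ≤ q (e t)), w ↑t :=
      (Finset.sum_filter _ _).symm
    rw [hflt]
    have himg : e '' ↑(Finset.univ.filter (fun t : Fin n => θ ≤ q (e t))) = {v | θ ≤ q v} := by
      ext v
      constructor
      · rintro ⟨t, ht, rfl⟩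
        have := Finset.mem_filter.1 (Finset.mem_coe.1 ht)
        exact this.2
      · intro hv
        refine ⟨e.symm v, Finset.mem_coe.2 (Finset.mem_filter.2 ⟨Finset.mem_univ _, ?_⟩),
          e.apply_symm_apply v⟩
        rwa [e.apply_symm_apply]
    calc ∑ t ∈ Finset.univ.filter (fun t : Fin n => θ ≤ q (e t)), w ↑t
        ≤ f (e '' ↑(Finset.univ.filter (fun t : Fin n => θ ≤ q (e t)))) := hGCL _
      _ = f {v | θ ≤ q v} := by rw [himg]
  have hprefix : ∀ (T : Finset (Fin n)), (∀ s t : Fin n, s ≤ t → t ∈ T → s ∈ T) →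
      ∀ t : Fin n, t ∈ T ↔ (t : ℕ) < T.card := by
    intro T hdc t
    constructor
    · intro ht
      have hmap : ∀ j ∈ Finset.range ((t : ℕ) + 1), ∀ hj : j < n, (⟨j, hj⟩ : Fin n) ∈ T := by
        intro j hjr hj
        apply hdc _ t _ ht
        have : j ≤ (t : ℕ) := Nat.lt_succ_iff.1 (Finset.mem_range.1 hjr)
        exact this
      have hcard : ((t : ℕ) + 1) ≤ T.card := by
        have := Finset.card_le_card_of_injOn
          (f := fun j : ℕ => if hj : j < n then (⟨j, hj⟩ : Fin n) else t)
          (s := Finset.range ((t : ℕ) + 1)) (t := T) ?_ ?_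
        · simpa using this
        · intro j hjr
          have hjt : j ≤ (t : ℕ) := Nat.lt_succ_iff.1 (Finset.mem_range.1 hjr)
          have hj : j < n := lt_of_le_of_lt hjt t.isLt
          simp only [dif_pos hj]
          exact hmap j hjr hj
        · intro j hj j' hj' hee
          have hjt : j < n := lt_of_le_of_lt (Nat.lt_succ_iff.1 (Finset.mem_range.1 hj)) t.isLt
          have hjt' : j' < n := lt_of_le_of_lt (Nat.lt_succ_iff.1 (Finset.mem_range.1 hj')) t.isLt
          simp only [dif_pos hjt, dif_pos hjt'] at hee
          exact Fin.mk.inj_iff.1 hee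
      omega
    · intro hcard
      by_contra ht
      have hsubT : ∀ s ∈ T, (s : ℕ) < (t : ℕ) := by
        intro s hs
        by_contra hge
        exact ht (hdc t s (by omega : t ≤ s) hs)
      have : T.card ≤ (t : ℕ) := by
        have := Finset.card_le_card_of_injOn (f := fun s : Fin n => (s : ℕ))
          (s := T) (t := Finset.range (t : ℕ))
          (fun s hs => Finset.mem_range.2 (hsubT s hs))
          (fun s _ s' _ h => Fin.ext h)
        simpa using this
      omega
  have stepB : lov f u ≤ ∑ t : Fin n, u (e t) * w ↑t := by
    have hpt : ∀ θ : ℝ, f {v | θ ≤ u v} = ∑ t : Fin n, (if θ ≤ u (e t) then w ↑t else 0) := by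
      intro θ
      set T : Finset (Fin n) := Finset.univ.filter (fun t => θ ≤ u (e t)) with hT
      have hdc : ∀ s t : Fin n, s ≤ t → t ∈ T → s ∈ T := by
        intro s t hst ht
        rw [hT, Finset.mem_filter] at ht ⊢
        exact ⟨Finset.mem_univ _, le_trans ht.2 (hanti s t hst)⟩
      have hmem := hprefix T hdc
      set c := T.card with hc
      have hcn : c ≤ n := by
        rw [hc]
        calc T.card ≤ Finset.univ.card := Finset.card_le_card (Finset.subset_univ T)
          _ = n := by simp
      have hset : {v | θ ≤ u v} = P c := by
        ext v
        constructor
        · intro hv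
          refine ⟨e.symm v, ?_, e.apply_symm_apply v⟩
          have hvT : e.symm v ∈ T := by
            rw [hT, Finset.mem_filter]
            exact ⟨Finset.mem_univ _, by rwa [e.apply_symm_apply]⟩
          exact (hmem _).1 hvT
        · rintro ⟨s, hs, rfl⟩
          have hsT : s ∈ T := (hmem s).2 hs
          rw [hT, Finset.mem_filter] at hsT
          exact hsT.2
      have hsum1 : ∑ t : Fin n, (if θ ≤ u (e t) then w ↑t else 0) = ∑ t ∈ T, w ↑t := by
        rw [hT]; exact (Finset.sum_filter _ _).symm
      have hT2 : T = Finset.univ.filter (fun t : Fin n => (t : ℕ) < c) := by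
        ext t
        constructor
        · intro h; exact Finset.mem_filter.2 ⟨Finset.mem_univ _, (hmem t).1 h⟩
        · intro h; exact (hmem t).2 (Finset.mem_filter.1 h).2
      have hsum2 : ∑ t ∈ T, w ↑t = ∑ j ∈ Finset.range c, w j := by
        rw [hT2, Finset.sum_filter]
        rw [Fin.sum_univ_eq_sum_range (fun j => if j < c then w j else 0) n]
        rw [← Finset.sum_filter]
        congr 1
        ext j
        simp only [Finset.mem_filter, Finset.mem_range]
        exact ⟨fun h => h.2, fun h => ⟨lt_of_lt_of_le h hcn, h⟩⟩
      have hP0 : P 0 = ∅ := by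
        show ⇑e '' {s : Fin n | (s : ℕ) < 0} = ∅
        have h0 : {s : Fin n | (s : ℕ) < 0} = ∅ := by ext s; simp
        rw [h0, Set.image_empty]
      have htel : ∑ j ∈ Finset.range c, w j = f (P c) - f (P 0) :=
        Finset.sum_range_sub (fun j => f (P j)) c
      rw [hset, hsum1, hsum2, htel, hP0, hempty, sub_zero]
    have heq : lov f u = ∫ θ in (0:ℝ)..2, ∑ t : Fin n, (if θ ≤ u (e t) then w ↑t else 0) := by
      unfold lov
      exact intervalIntegral.integral_congr (fun θ _ => hpt θ)
    rw [heq, intervalIntegral.integral_finset_sum (fun t _ => ii_ite (u (e t)) (w ↑t) 0 2)]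
    apply le_of_eq
    exact Finset.sum_congr rfl fun t _ =>
      hterm u t (add_nonneg (hy _) (hz _)) (hyz _)
  have h2 := stepA y hy (fun v => by linarith [hz v, hyz v])
  have h3 := stepA z hz (fun v => by linarith [hy v, hyz v])
  have hsplit : ∑ t : Fin n, u (e t) * w ↑t
      = ∑ t : Fin n, y (e t) * w ↑t + ∑ t : Fin n, z (e t) * w ↑t := by
    rw [← Finset.sum_add_distrib]
    refine Finset.sum_congr rfl fun t _ => ?_
    rw [hu]; ring
  linarith [stepB]

lemma lov_uncross (f : Set V → ℝ)
    (hsub : ∀ A B : Set V, f A + f B ≥ f (A ∩ B) + f (A ∪ B))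
    (hempty : f (∅ : Set V) = 0)
    {ι : Type*} (F : ι → V → ℝ) (hF0 : ∀ i v, 0 ≤ F i v) :
    ∀ (s : Finset ι) (hs : s.Nonempty), (∀ v, ∑ i ∈ s, F i v ≤ 1) →
    lov f (fun v => s.sup' hs (fun i => F i v)) +
      lov f (fun v => (∑ i ∈ s, F i v) - s.sup' hs (fun i => F i v)) ≤
      ∑ i ∈ s, lov f (F i) := by
  intro s hs
  induction hs using Finset.Nonempty.cons_induction with
  | singleton a =>
    intro _
    simp only [Finset.sup'_singleton, Finset.sum_singleton]
    have h0 : (fun v => F a v - F a v) = fun _ => (0:ℝ) := by funext v; ring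
    rw [h0, lov_zero f hempty]
    simp
  | cons a t hat ht ih =>
    intro hsum1
    have hsum1t : ∀ v, ∑ i ∈ t, F i v ≤ 1 := by
      intro v
      have := hsum1 v
      rw [Finset.sum_cons] at this
      linarith [hF0 a v]
    have hIH := ih hsum1t
    obtain ⟨i0, hi0⟩ := id ht
    have hY0 : ∀ v, 0 ≤ t.sup' ht (fun i => F i v) :=
      fun v => le_trans (hF0 i0 v) (Finset.le_sup' (fun i => F i v) hi0)
    have hYS : ∀ v, t.sup' ht (fun i => F i v) ≤ ∑ i ∈ t, F i v := by
      intro v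
      apply Finset.sup'_le
      intro i hi
      exact Finset.single_le_sum (f := fun i => F i v) (fun j _ => hF0 j v) hi
    have hlat := lov_lattice f hsub (F a) (fun v => t.sup' ht (fun i => F i v))
    have hsubadd := lov_subadd f hsub hempty
      (fun v => min (F a v) (t.sup' ht (fun i => F i v)))
      (fun v => (∑ i ∈ t, F i v) - t.sup' ht (fun i => F i v))
      (fun v => le_min (hF0 a v) (hY0 v))
      (fun v => by linarith [hYS v])
      (fun v => by
        have h1 := min_le_left (F a v) (t.sup' ht (fun i => F i v))
        have h2 := hsum1 v
        rw [Finset.sum_cons] at h2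
        linarith [hY0 v])
    have heq1 : (fun v => min (F a v) (t.sup' ht (fun i => F i v)) +
        ((∑ i ∈ t, F i v) - t.sup' ht (fun i => F i v))) =
        fun v => (∑ i ∈ Finset.cons a t hat, F i v) -
          (Finset.cons a t hat).sup' (Finset.cons_nonempty hat) (fun i => F i v) := by
      funext v
      rw [Finset.sum_cons, Finset.sup'_cons (H := ht)]
      have := min_add_max (F a v) (t.sup' ht (fun i => F i v))
      have hmax : F a v ⊔ t.sup' ht (fun i => F i v) = max (F a v) (t.sup' ht (fun i => F i v)) := rfl
      have hmin : F a v ⊓ t.sup' ht (fun i => F i v) = min (F a v) (t.sup' ht (fun i => F i v)) := rfl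
      rw [hmax] at this ⊢
      rw [hmin] at this
      linarith
    have heq2 : (fun v => (Finset.cons a t hat).sup' (Finset.cons_nonempty hat) (fun i => F i v)) =
        fun v => max (F a v) (t.sup' ht (fun i => F i v)) := by
      funext v
      rw [Finset.sup'_cons (H := ht)]
    rw [heq2, Finset.sum_cons]
    rw [heq1] at hsubadd
    linarith

lemma lov_symm (f : Set V → ℝ) (hsym : ∀ A : Set V, f A = f (Set.univ \ A))
    (hempty : f (∅ : Set V) = 0)
    (m : V → ℝ) (h0 : ∀ v, 0 ≤ m v) (h1 : ∀ v, m v ≤ 1) :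
    lov f (fun v => 1 - m v) = lov f m := by
  rw [lov_eq_int01 f hempty _ (fun v => by linarith [h0 v]), lov_eq_int01 f hempty m h1]
  have e1 : ∫ θ in (0:ℝ)..1, f {v | θ ≤ 1 - m v} = ∫ θ in (0:ℝ)..1, f {v | m v ≤ 1 - θ} := by
    apply intervalIntegral.integral_congr
    intro θ _
    have hs : {v : V | θ ≤ 1 - m v} = {v : V | m v ≤ 1 - θ} := by
      ext v; simp only [mem_setOf_eq]; constructor <;> intro h <;> linarith
    show f {v : V | θ ≤ 1 - m v} = f {v : V | m v ≤ 1 - θ}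
    rw [hs]
  have e2 : ∫ θ in (0:ℝ)..1, f {v | m v ≤ 1 - θ} = ∫ s in (0:ℝ)..1, f {v | m v ≤ s} := by
    have := intervalIntegral.integral_comp_sub_left (a := 0) (b := 1)
      (fun s => f {v | m v ≤ s}) 1
    simpa using this
  have e3 : ∫ s in (0:ℝ)..1, f {v | m v ≤ s} = ∫ s in (0:ℝ)..1, f {v | s < m v} := by
    apply intervalIntegral.integral_congr
    intro s _
    show f {v : V | m v ≤ s} = f {v : V | s < m v}
    have hc : {v : V | m v ≤ s} = Set.univ \ {v | s < m v} := by
      ext v; simp [not_lt]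
    rw [hc, ← hsym]
  have e4 : ∫ s in (0:ℝ)..1, f {v | s < m v} = ∫ s in (0:ℝ)..1, f {v | s ≤ m v} := by
    apply intervalIntegral.integral_congr_ae
    have hE : ∀ᵐ s : ℝ, s ∉ ⋃ v : V, ({m v} : Set ℝ) := by
      rw [MeasureTheory.ae_iff]
      have h' : {s : ℝ | ¬ s ∉ ⋃ v : V, ({m v} : Set ℝ)} = ⋃ v : V, ({m v} : Set ℝ) := by
        ext s; simp
      rw [h']
      exact MeasureTheory.measure_iUnion_null fun v => MeasureTheory.measure_singleton _
    filter_upwards [hE] with s hs _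
    show f {v : V | s < m v} = f {v : V | s ≤ m v}
    congr 1
    ext v
    simp only [mem_setOf_eq]
    constructor
    · exact le_of_lt
    · intro h
      rcases lt_or_eq_of_le h with h' | h'
      · exact h'
      · exact absurd (Set.mem_iUnion.2 ⟨v, by simp [h']⟩) hs
  rw [e1, e2, e3, e4]

lemma lov_half {k : ℕ} (f : Set V → ℝ)
    (hsub : ∀ A B : Set V, f A + f B ≥ f (A ∩ B) + f (A ∪ B))
    (hsym : ∀ A : Set V, f A = f (Set.univ \ A))
    (hempty : f (∅ : Set V) = 0)
    (x : V → Fin (k + 1) → ℝ) (hx0 : ∀ v i, 0 ≤ x v i) (hxsum : ∀ v, ∑ i, x v i = 1) :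
    ∫ θ in (0:ℝ)..1, f {v : V | ∀ i : Fin (k + 1), x v i < θ} ≤
      (1 / 2) * ∑ i : Fin (k + 1), ∫ θ in (0:ℝ)..1, f {v : V | θ ≤ x v i} := by
  classical
  have huniv : (Finset.univ : Finset (Fin (k + 1))).Nonempty := Finset.univ_nonempty
  set m : V → ℝ := fun v => Finset.univ.sup' huniv (fun i => x v i) with hm
  have hm0 : ∀ v, 0 ≤ m v :=
    fun v => le_trans (hx0 v 0) (Finset.le_sup' (fun i => x v i) (Finset.mem_univ 0))
  have hm1 : ∀ v, m v ≤ 1 := by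
    intro v
    apply Finset.sup'_le
    intro i _
    rw [← hxsum v]
    exact Finset.single_le_sum (f := fun j => x v j) (fun j _ => hx0 v j) (Finset.mem_univ i)
  have hxb : ∀ v i, x v i ≤ 1 := by
    intro v i
    exact le_trans (Finset.le_sup' (fun j => x v j) (Finset.mem_univ i)) (hm1 v)
  have huncross := lov_uncross f hsub hempty (fun i v => x v i) (fun i v => hx0 v i)
    Finset.univ huniv (fun v => le_of_eq (hxsum v))
  have hsub1 : (fun v => (∑ i : Fin (k+1), x v i) - Finset.univ.sup' huniv (fun i => x v i))
      = fun v => 1 - m v := by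
    funext v
    rw [hxsum v, hm]
  rw [hsub1] at huncross
  have hsymm := lov_symm f hsym hempty m hm0 hm1
  rw [hsymm] at huncross
  -- huncross : lov f m + lov f m ≤ ∑ i, lov f (x · i)  (note sup' form vs m)
  have hU : ∀ θ : ℝ, f {v : V | ∀ i : Fin (k + 1), x v i < θ} = f {v : V | θ ≤ m v} := by
    intro θ
    have hc : {v : V | θ ≤ m v} = Set.univ \ {v : V | ∀ i, x v i < θ} := by
      ext v
      simp only [hm, mem_setOf_eq, Set.mem_diff, Set.mem_univ, true_and,
        Finset.le_sup'_iff, not_forall, not_lt]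
      constructor
      · rintro ⟨i, _, h⟩; exact ⟨i, h⟩
      · rintro ⟨i, h⟩; exact ⟨i, Finset.mem_univ i, h⟩
    rw [hsym {v : V | ∀ i, x v i < θ}, ← hc]
  have hUint : ∫ θ in (0:ℝ)..1, f {v : V | ∀ i : Fin (k + 1), x v i < θ}
      = lov f m := by
    rw [lov_eq_int01 f hempty m hm1]
    exact intervalIntegral.integral_congr (fun θ _ => hU θ)
  have hAint : ∀ i : Fin (k + 1),
      lov f (fun v => x v i) = ∫ θ in (0:ℝ)..1, f {v : V | θ ≤ x v i} :=
    fun i => lov_eq_int01 f hempty (fun v => x v i) (fun v => hxb v i)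
  have hsum_eq : ∑ i : Fin (k+1), lov f (fun v => x v i)
      = ∑ i : Fin (k+1), ∫ θ in (0:ℝ)..1, f {v : V | θ ≤ x v i} :=
    Finset.sum_congr rfl fun i _ => hAint i
  rw [hUint]
  have hmm : lov f (fun v => Finset.univ.sup' huniv (fun i => x v i)) = lov f m := by rw [hm]
  rw [hmm] at huncross
  linarith [huncross, hsum_eq.symm.le, hsum_eq.le]

end SymRoundAux

/-- Combined expected cost bound for the symmetric rounding algorithm: if for every `θ`
the sets `A'_1(θ), …, A'_k(θ)` are pairwise disjoint with the same union as the sets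
`A(i,θ)` and no larger total cost, then
`∫_0^1 [Σ_{i≠k} f(A'_i(θ)) + f(A'_k(θ) ∪ U(θ))] dθ ≤ (3/2) Σ_i ∫_0^1 f(A(i,θ)) dθ`.
The `k ≥ 1` labels are indexed by `Fin (k+1)` with last label `Fin.last k`. -/
theorem symmetric_rounding_cost_bound {V : Type*} [Fintype V] {k : ℕ}
    (f : Set V → ℝ)
    (hsub : ∀ A B : Set V, f A + f B ≥ f (A ∩ B) + f (A ∪ B))
    (hsym : ∀ A : Set V, f A = f (Set.univ \ A))
    (hnonneg : ∀ S : Set V, 0 ≤ f S) (hempty : f (∅ : Set V) = 0)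
    (x : V → Fin (k + 1) → ℝ)
    (hx0 : ∀ v i, 0 ≤ x v i) (hxsum : ∀ v, ∑ i, x v i = 1)
    (A' : ℝ → Fin (k + 1) → Set V)
    (hdisj : ∀ θ : ℝ, Pairwise (Function.onFun Disjoint (A' θ)))
    (hunion : ∀ θ : ℝ, (⋃ i, A' θ i) = ⋃ i, {v : V | θ ≤ x v i})
    (hcost : ∀ θ : ℝ, ∑ i, f (A' θ i) ≤ ∑ i, f {v : V | θ ≤ x v i}) :
    (∫ θ in (0:ℝ)..1,
        ((∑ i ∈ Finset.univ.erase (Fin.last k), f (A' θ i))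
          + f (A' θ (Fin.last k) ∪ {v : V | ∀ i : Fin (k + 1), x v i < θ}))) ≤
      (3 / 2) * ∑ i : Fin (k + 1), ∫ θ in (0:ℝ)..1, f {v : V | θ ≤ x v i} := by
  classical
  by_cases hInt : IntervalIntegrable (fun θ =>
      (∑ i ∈ Finset.univ.erase (Fin.last k), f (A' θ i))
        + f (A' θ (Fin.last k) ∪ {v : V | ∀ i : Fin (k + 1), x v i < θ})) MeasureTheory.volume 0 1
  · have hiiA : ∀ i : Fin (k+1),
        IntervalIntegrable (fun θ => f {v : V | θ ≤ x v i}) MeasureTheory.volume 0 1 :=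
      fun i => SymRoundAux.ii_lov f (fun v => x v i) 0 1
    have hiiU : IntervalIntegrable (fun θ => f {v : V | ∀ i : Fin (k+1), x v i < θ})
        MeasureTheory.volume 0 1 := by
      apply SymRoundAux.ii_f_comp f (fun θ => {v : V | ∀ i, x v i < θ})
      intro v
      have h1 : {θ : ℝ | v ∈ {v' : V | ∀ i, x v' i < θ}} = ⋂ i : Fin (k+1), Set.Ioi (x v i) := by
        ext θ; simp [Set.mem_Ioi]
      rw [h1]
      exact MeasurableSet.iInter fun i => measurableSet_Ioi
    have hiiSum : IntervalIntegrable (fun θ => ∑ i : Fin (k+1), f {v : V | θ ≤ x v i})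
        MeasureTheory.volume 0 1 := by
      have hii := IntervalIntegrable.sum (μ := MeasureTheory.volume) (a := (0:ℝ)) (b := 1)
        Finset.univ (f := fun (i : Fin (k+1)) (θ : ℝ) => f {v : V | θ ≤ x v i})
        (fun i _ => hiiA i)
      have hfn : (∑ i : Fin (k+1), fun (θ:ℝ) => f {v : V | θ ≤ x v i})
          = fun (θ:ℝ) => ∑ i : Fin (k+1), f {v : V | θ ≤ x v i} := by funext θ; simp
      rwa [hfn] at hii
    have hmono := intervalIntegral.integral_mono_on (a := 0) (b := 1)
      (μ := MeasureTheory.volume) (by norm_num) hInt (hiiSum.add hiiU) ?ptwise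
    case ptwise =>
      intro θ _
      show (∑ i ∈ Finset.univ.erase (Fin.last k), f (A' θ i))
          + f (A' θ (Fin.last k) ∪ {v : V | ∀ i : Fin (k + 1), x v i < θ})
          ≤ (∑ i : Fin (k+1), f {v : V | θ ≤ x v i}) + f {v : V | ∀ i : Fin (k+1), x v i < θ}
      have hU := hsub (A' θ (Fin.last k)) {v : V | ∀ i, x v i < θ}
      have hUnn := hnonneg (A' θ (Fin.last k) ∩ {v : V | ∀ i, x v i < θ})
      have hsplit := Finset.sum_erase_add Finset.univ (fun i => f (A' θ i))
        (Finset.mem_univ (Fin.last k))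
      have hc := hcost θ
      linarith
    have hsplit2 : ∫ θ in (0:ℝ)..1, ((∑ i : Fin (k+1), f {v : V | θ ≤ x v i})
        + f {v : V | ∀ i : Fin (k+1), x v i < θ})
        = (∑ i : Fin (k+1), ∫ θ in (0:ℝ)..1, f {v : V | θ ≤ x v i})
          + ∫ θ in (0:ℝ)..1, f {v : V | ∀ i : Fin (k+1), x v i < θ} := by
      rw [intervalIntegral.integral_add hiiSum hiiU,
        intervalIntegral.integral_finset_sum (fun i _ => hiiA i)]
    have hhalf := SymRoundAux.lov_half f hsub hsym hempty x hx0 hxsum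
    rw [hsplit2] at hmono
    linarith
  · rw [intervalIntegral.integral_undef hInt]
    have hnn : ∀ i : Fin (k+1), 0 ≤ ∫ θ in (0:ℝ)..1, f {v : V | θ ≤ x v i} :=
      fun i => intervalIntegral.integral_nonneg (by norm_num) (fun θ _ => hnonneg _)
    have hs : 0 ≤ ∑ i : Fin (k+1), ∫ θ in (0:ℝ)..1, f {v : V | θ ≤ x v i} :=
      Finset.sum_nonneg fun i _ => hnn i
    linarith
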